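/- Fix a nominal reward R₀ : S → A → ℝ, α > 0, and p ∈ (1,∞) with Hölder conjugate q = p/(p-1). Define F : (S → A → ℝ) → ℝ by F(π) = ∑_{s,a} D(π)(s,a) * R₀(s,a) - α * (∑_{s,a} D(π)(s,a)^q)^{1/q}, where D(π)(s,a) = (μᵀ (I - γ P^π)⁻¹)(s) * π(s,a) (Mathlib matrix inverse; genuine inverse at every policy); on policies, F equals the reward-robust return min_{‖R-R₀‖_p ≤ α} ρ^π_R. Let π be a policy with π(s,a) > 0 for all (s,a). Let R*(s,a) = R₀(s,a) - α * (D(π)(s,a)/‖D(π)‖_q)^(q-1) be the worst-case reward at π, let v* = (I - γ P^π)⁻¹ (R*)^π with (R*)^π(s) = ∑_a π s a * R*(s,a), and let Q*(s,a) = R*(s,a) + γ * ∑_{s'} P s a s' * v*(s'). Then F is differentiable at π and its Fréchet derivative satisfies, for every direction u : S → A → ℝ, DF(π)[u] = ∑_{s,a} d^π(s) * Q*(s,a) * u(s,a), where d^π(s) = (μᵀ (I - γ P^π)⁻¹)(s). -/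

import Mathlib

open Finset

noncomputable section

/-- `P^π(s,s') = ∑ a, π s a * P s a s'`. -/
def Pmat {S A : Type*} [Fintype A] (P : S → A → S → ℝ) (π : S → A → ℝ) :
    Matrix S S ℝ := fun s s' => ∑ a, π s a * P s a s'

/-- state occupation measure `d^π = μᵀ (I - γ P^π)⁻¹`. -/
def dPi {S A : Type*} [Fintype S] [Fintype A] [DecidableEq S]
    (γ : ℝ) (P : S → A → S → ℝ) (μ : S → ℝ) (π : S → A → ℝ) : S → ℝ :=
  fun s' => ∑ s, μ s * (1 - γ • Pmat P π)⁻¹ s s'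

/-- state-action occupation measure `d^π(s,a) = d^π(s) * π s a`. -/
def dSA {S A : Type*} [Fintype S] [Fintype A] [DecidableEq S]
    (γ : ℝ) (P : S → A → S → ℝ) (μ : S → ℝ) (π : S → A → ℝ) : S → A → ℝ :=
  fun s a => dPi γ P μ π s * π s a

/-- return `ρ^π_R = ∑_{s,a} d^π(s,a) * R(s,a)`. -/
def mdpReturn {S A : Type*} [Fintype S] [Fintype A] [DecidableEq S]
    (γ : ℝ) (P : S → A → S → ℝ) (μ : S → ℝ) (π : S → A → ℝ) (R : S → A → ℝ) : ℝ :=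
  ∑ s, ∑ a, dSA γ P μ π s a * R s a

/-- `‖x‖_r = (∑_{s,a} |x(s,a)|^r)^{1/r}` with real exponents via `Real.rpow`. -/
def LpNorm {S A : Type*} [Fintype S] [Fintype A] (r : ℝ) (x : S → A → ℝ) : ℝ :=
  (∑ s, ∑ a, |x s a| ^ r) ^ (1 / r)

end

/-- stationary policy predicate -/
def IsPolicy {S A : Type*} [Fintype A] (π : S → A → ℝ) : Prop :=
  (∀ s a, 0 ≤ π s a) ∧ ∀ s, ∑ a, π s a = 1

noncomputable section Aux

attribute [local instance] Matrix.linftyOpNormedRing Matrix.linftyOpNormedAlgebra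
  Matrix.linftyOpNormedAddCommGroup Matrix.linftyOpNormedSpace

namespace Stmt19Aux

theorem norm_lt {S A : Type*} [Fintype S] [Fintype A] [DecidableEq S]
    {γ : ℝ} (hγ0 : 0 ≤ γ) (hγ1 : γ < 1)
    {P : S → A → S → ℝ} (hP : ∀ s a s', 0 ≤ P s a s')
    (hPsum : ∀ s a, ∑ s', P s a s' = 1)
    {π : S → A → ℝ} (hπ : (∀ s a, 0 ≤ π s a) ∧ ∀ s, ∑ a, π s a = 1) :
    ‖γ • (Pmat P π : Matrix S S ℝ)‖ < 1 := by
  have h1 : ∀ s s', (γ • (Pmat P π : Matrix S S ℝ)) s s' = γ * ∑ a, π s a * P s a s' := by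
    intro s s'; simp [Pmat, Matrix.smul_apply]
  have hrow : ∀ s, ∑ s', ‖(γ • (Pmat P π : Matrix S S ℝ)) s s'‖₊ = γ.toNNReal := by
    intro s
    have h2 : ∀ s', 0 ≤ (γ • (Pmat P π : Matrix S S ℝ)) s s' := by
      intro s'
      rw [h1]
      exact mul_nonneg hγ0 (Finset.sum_nonneg fun a _ => mul_nonneg (hπ.1 s a) (hP s a s'))
    have hsum : ∑ s', (γ • (Pmat P π : Matrix S S ℝ)) s s' = γ := by
      simp only [h1, ← Finset.mul_sum]
      rw [Finset.sum_comm]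
      simp_rw [← Finset.mul_sum, hPsum, mul_one, hπ.2 s, mul_one]
    have : ((∑ s', ‖(γ • (Pmat P π : Matrix S S ℝ)) s s'‖₊ : NNReal) : ℝ)
        = ((γ.toNNReal : NNReal) : ℝ) := by
      push_cast
      rw [Real.coe_toNNReal _ hγ0]
      calc ∑ s', ‖(γ • (Pmat P π : Matrix S S ℝ)) s s'‖
          = ∑ s', (γ • (Pmat P π : Matrix S S ℝ)) s s' :=
            Finset.sum_congr rfl fun s' _ => by
              rw [Real.norm_eq_abs, abs_of_nonneg (h2 s')]
        _ = γ := hsum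
    exact_mod_cast this
  rw [Matrix.linfty_opNorm_def]
  calc ((Finset.univ.sup fun i => ∑ j, ‖(γ • (Pmat P π : Matrix S S ℝ)) i j‖₊ : NNReal) : ℝ)
      ≤ ((γ.toNNReal : NNReal) : ℝ) := by
        exact_mod_cast Finset.sup_le fun i _ => le_of_eq (hrow i)
    _ < 1 := by rw [Real.coe_toNNReal _ hγ0]; exact hγ1

variable {S : Type*} [Fintype S] [DecidableEq S]

/-- matrix entry evaluation as continuous linear map. -/
def entryCLM (s t : S) : Matrix S S ℝ →L[ℝ] ℝ :=
  LinearMap.toContinuousLinearMap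
    { toFun := fun M => M s t
      map_add' := fun _ _ => rfl
      map_smul' := fun _ _ => rfl }

@[simp] theorem entryCLM_apply (s t : S) (M : Matrix S S ℝ) : entryCLM s t M = M s t := rfl

theorem Bnn_pow {B : Matrix S S ℝ} (hB : ∀ s t, 0 ≤ B s t) (n : ℕ) :
    ∀ s t, 0 ≤ (B ^ n) s t := by
  induction n with
  | zero => intro s t; simp [Matrix.one_apply]; split <;> norm_num
  | succ n ih =>
    intro s t
    rw [pow_succ, Matrix.mul_apply]
    exact Finset.sum_nonneg fun k _ => mul_nonneg (ih s k) (hB k t)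

theorem inv_one_sub_nonneg {B : Matrix S S ℝ} (hB : ∀ s t, 0 ≤ B s t)
    (hnorm : ‖B‖ < 1) : ∀ s t, 0 ≤ (1 - B)⁻¹ s t := by
  intro s t
  have hsummable : Summable fun n : ℕ => B ^ n := summable_geometric_of_norm_lt_one hnorm
  have h1 : (1 - B)⁻¹ = ∑' n : ℕ, B ^ n := by
    rw [Matrix.nonsing_inv_eq_ringInverse]
    have : (1 - B) = ↑(Units.oneSub B hnorm) := rfl
    rw [this, Ring.inverse_unit]
    rfl
  have h2 : (1 - B)⁻¹ s t = ∑' n : ℕ, (B ^ n) s t := by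
    rw [h1]
    exact ((entryCLM s t).hasSum hsummable.hasSum).tsum_eq.symm
  rw [h2]
  exact tsum_nonneg fun n => Bnn_pow hB n s t

theorem isUnit_one_sub {B : Matrix S S ℝ} (hnorm : ‖B‖ < 1) : IsUnit (1 - B) :=
  ⟨Units.oneSub B hnorm, rfl⟩

theorem inv_one_sub_diag {B : Matrix S S ℝ} (hB : ∀ s t, 0 ≤ B s t)
    (hnorm : ‖B‖ < 1) : ∀ s, 1 ≤ (1 - B)⁻¹ s s := by
  intro s
  have hunit := isUnit_one_sub hnorm
  have h1 : (1 - B)⁻¹ * (1 - B) = 1 :=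
    Matrix.nonsing_inv_mul _ ((Matrix.isUnit_iff_isUnit_det _).mp hunit)
  have h2 : (1 - B)⁻¹ = 1 + (1 - B)⁻¹ * B := by
    rw [Matrix.mul_sub, Matrix.mul_one] at h1
    linear_combination (norm := abel) h1
  have h3 : (0:ℝ) ≤ ((1 - B)⁻¹ * B) s s := by
    rw [Matrix.mul_apply]
    exact Finset.sum_nonneg fun k _ => mul_nonneg (inv_one_sub_nonneg hB hnorm s k) (hB k s)
  calc (1:ℝ) ≤ 1 + ((1 - B)⁻¹ * B) s s := by linarith
    _ = (1 - B)⁻¹ s s := by conv_rhs => rw [h2, Matrix.add_apply, Matrix.one_apply_eq]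


def pmatL {S A : Type*} [Fintype S] [Fintype A] (γ : ℝ) (P : S → A → S → ℝ) :
    (S → A → ℝ) →ₗ[ℝ] Matrix S S ℝ where
  toFun := fun u => -(γ • Pmat P u)
  map_add' := by
    intro x y
    show -(γ • Pmat P (x + y)) = -(γ • Pmat P x) + -(γ • Pmat P y)
    have : Pmat P (x + y) = Pmat P x + Pmat P y := by
      ext s s'
      simp [Pmat, Matrix.add_apply, add_mul, Finset.sum_add_distrib]
    rw [this]; module
  map_smul' := by
    intro c x
    show -(γ • Pmat P (c • x)) = c • -(γ • Pmat P x)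
    have : Pmat P (c • x) = c • Pmat P x := by
      ext s s'
      simp [Pmat, Matrix.smul_apply, Finset.mul_sum, mul_assoc]
    rw [this]; module

def evalCLM {S A : Type*} [Fintype S] [Fintype A] (s : S) (a : A) :
    (S → A → ℝ) →L[ℝ] ℝ :=
  LinearMap.toContinuousLinearMap
    { toFun := fun u => u s a
      map_add' := fun _ _ => rfl
      map_smul' := fun _ _ => rfl }

@[simp] theorem evalCLM_apply {S A : Type*} [Fintype S] [Fintype A] (s : S) (a : A)
    (u : S → A → ℝ) : evalCLM s a u = u s a := rfl

theorem deriv_package {S A : Type*} [Fintype S] [Fintype A] [DecidableEq S]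
    (γ : ℝ) (P : S → A → S → ℝ) (μ : S → ℝ) (π : S → A → ℝ)
    (hunit : IsUnit ((1 : Matrix S S ℝ) - γ • Pmat P π)) :
    ∃ δ : S → A → ((S → A → ℝ) →L[ℝ] ℝ),
      (∀ s a, HasFDerivAt (fun x : S → A → ℝ => dPi γ P μ x s * x s a) (δ s a) π) ∧
      (∀ s a u, δ s a u = dPi γ P μ π s * u s a +
        π s a * ∑ s₀, μ s₀ *
          (((1 - γ • Pmat P π)⁻¹ : Matrix S S ℝ) * (γ • Pmat P u) *
            ((1 - γ • Pmat P π)⁻¹ : Matrix S S ℝ)) s₀ s) := by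
  have hinv_eq : ∀ x : S → A → ℝ,
      ((1:Matrix S S ℝ) - γ • Pmat P x)⁻¹ = Ring.inverse ((1:Matrix S S ℝ) - γ • Pmat P x) :=
    fun x => Matrix.nonsing_inv_eq_ringInverse _
  have hWinv : (↑hunit.unit⁻¹ : Matrix S S ℝ) = ((1:Matrix S S ℝ) - γ • Pmat P π)⁻¹ := by
    rw [hinv_eq π]
    conv_rhs => rw [← hunit.unit_spec]
    rw [Ring.inverse_unit]
  have hℓ : HasFDerivAt (fun x : S → A → ℝ => (1:Matrix S S ℝ) - γ • Pmat P x)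
      ((pmatL γ P).toContinuousLinearMap) π := by
    have h := (((pmatL γ P).toContinuousLinearMap).hasFDerivAt (x := π)).const_add
      (1 : Matrix S S ℝ)
    have he : (fun x : S → A → ℝ => (1:Matrix S S ℝ) - γ • Pmat P x)
        = fun x => (1:Matrix S S ℝ) + (pmatL γ P).toContinuousLinearMap x := by
      funext x
      rw [sub_eq_add_neg]
      rfl
    rw [he]
    exact h
  have hNinv : HasFDerivAt
      (fun x : S → A → ℝ => Ring.inverse ((1:Matrix S S ℝ) - γ • Pmat P x))
      ((-(ContinuousLinearMap.mulLeftRight ℝ (Matrix S S ℝ) ↑hunit.unit⁻¹ ↑hunit.unit⁻¹)).comp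
        (pmatL γ P).toContinuousLinearMap) π := by
    have hinvd := hasFDerivAt_ringInverse (𝕜 := ℝ) (R := Matrix S S ℝ) hunit.unit
    rw [hunit.unit_spec] at hinvd
    exact hinvd.comp π hℓ
  have happ : ∀ u : S → A → ℝ,
      ((-(ContinuousLinearMap.mulLeftRight ℝ (Matrix S S ℝ) ↑hunit.unit⁻¹ ↑hunit.unit⁻¹)).comp
        (pmatL γ P).toContinuousLinearMap) u
      = ((1 - γ • Pmat P π)⁻¹ : Matrix S S ℝ) * (γ • Pmat P u) *
          ((1 - γ • Pmat P π)⁻¹ : Matrix S S ℝ) := by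
    intro u
    have h1 : (pmatL γ P).toContinuousLinearMap u = -(γ • Pmat P u) := rfl
    erw [ContinuousLinearMap.comp_apply, h1]
    rw [ContinuousLinearMap.neg_apply,
      ContinuousLinearMap.mulLeftRight_apply, hWinv]
    simp [Matrix.mul_neg, Matrix.neg_mul]
  refine ⟨fun s a => dPi γ P μ π s • evalCLM s a + π s a •
    (∑ s₀, μ s₀ • ((entryCLM s₀ s).comp
      ((-(ContinuousLinearMap.mulLeftRight ℝ (Matrix S S ℝ) ↑hunit.unit⁻¹ ↑hunit.unit⁻¹)).comp
        (pmatL γ P).toContinuousLinearMap))), fun s a => ?_, fun s a u => ?_⟩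
  · have hd : HasFDerivAt (fun x : S → A → ℝ => dPi γ P μ x s)
        (∑ s₀, μ s₀ • ((entryCLM s₀ s).comp
          ((-(ContinuousLinearMap.mulLeftRight ℝ (Matrix S S ℝ) ↑hunit.unit⁻¹ ↑hunit.unit⁻¹)).comp
            (pmatL γ P).toContinuousLinearMap))) π := by
      have h := HasFDerivAt.fun_sum (u := (Finset.univ : Finset S))
        (fun s₀ _ => (((entryCLM s₀ s).hasFDerivAt.comp π hNinv).const_mul (μ s₀)))
      have he : (fun x : S → A → ℝ => dPi γ P μ x s)
          = fun x => ∑ s₀, μ s₀ *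
              entryCLM s₀ s (Ring.inverse ((1:Matrix S S ℝ) - γ • Pmat P x)) := by
        funext x
        simp only [dPi, entryCLM_apply, hinv_eq x]
      rw [he]
      exact h
    exact hd.mul (evalCLM s a).hasFDerivAt
  · simp only [ContinuousLinearMap.add_apply, ContinuousLinearMap.smul_apply,
      ContinuousLinearMap.sum_apply, ContinuousLinearMap.comp_apply, ContinuousLinearMap.coe_comp',
      Function.comp_apply, entryCLM_apply,
      evalCLM_apply, happ u, smul_eq_mul]
    exact congrArg (fun t => dPi γ P μ π s * u s a + π s a * t)
      (Finset.sum_congr rfl fun x _ => by rw [← happ u]; rfl)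

end Stmt19Aux

end Aux

section Main

attribute [local instance] Matrix.linftyOpNormedRing Matrix.linftyOpNormedAlgebra
  Matrix.linftyOpNormedAddCommGroup Matrix.linftyOpNormedSpace

open Stmt19Aux in
open scoped Matrix in
theorem stmt_19 {S A : Type*} [Fintype S] [Fintype A] [Nonempty S] [Nonempty A] [DecidableEq S]
    (γ : ℝ) (hγ0 : 0 ≤ γ) (hγ1 : γ < 1)
    (P : S → A → S → ℝ) (hP : ∀ s a s', 0 ≤ P s a s')
    (hPsum : ∀ s a, ∑ s', P s a s' = 1)
    (μ : S → ℝ) (hμ : ∀ s, 0 < μ s) (hμsum : ∑ s, μ s = 1)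
    (R₀ : S → A → ℝ) (α : ℝ) (hα : 0 < α)
    (p q : ℝ) (hp : 1 < p) (hq : q = p / (p - 1))
    (D : (S → A → ℝ) → S → A → ℝ)
    (hD : ∀ (π : S → A → ℝ) s a, D π s a = dPi γ P μ π s * π s a)
    (F : (S → A → ℝ) → ℝ)
    (hF : ∀ π : S → A → ℝ, F π =
      (∑ s, ∑ a, D π s a * R₀ s a) - α * (∑ s, ∑ a, D π s a ^ q) ^ (1 / q))
    (π : S → A → ℝ) (hπpol : IsPolicy π) (hπpos : ∀ s a, 0 < π s a)
    (Rstar : S → A → ℝ)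
    (hRstar : ∀ s a, Rstar s a =
      R₀ s a - α * (D π s a / LpNorm q (D π)) ^ (q - 1))
    (vstar : S → ℝ)
    (hvstar : ∀ s, vstar s =
      ∑ s', (1 - γ • Pmat P π)⁻¹ s s' * ∑ a, π s' a * Rstar s' a)
    (Qstar : S → A → ℝ)
    (hQstar : ∀ s a, Qstar s a = Rstar s a + γ * ∑ s', P s a s' * vstar s') :
    DifferentiableAt ℝ F π ∧
    ∀ u : S → A → ℝ, fderiv ℝ F π u =
      ∑ s, ∑ a, dPi γ P μ π s * Qstar s a * u s a := by
  -- basic facts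
  have hp1 : (0:ℝ) < p - 1 := sub_pos.2 hp
  have hq1 : 1 < q := by rw [hq, lt_div_iff₀ hp1]; linarith
  have hq0 : 0 < q := lt_trans one_pos hq1
  -- matrix facts
  have hBnn : ∀ s t, 0 ≤ (γ • (Pmat P π : Matrix S S ℝ)) s t := by
    intro s t
    have : (γ • (Pmat P π : Matrix S S ℝ)) s t = γ * ∑ a, π s a * P s a t := by
      simp [Pmat, Matrix.smul_apply]
    rw [this]
    exact mul_nonneg hγ0 (Finset.sum_nonneg fun a _ => mul_nonneg (hπpol.1 s a) (hP s a t))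
  have hnorm : ‖γ • (Pmat P π : Matrix S S ℝ)‖ < 1 := norm_lt hγ0 hγ1 hP hPsum hπpol
  have hunit : IsUnit ((1:Matrix S S ℝ) - γ • Pmat P π) := isUnit_one_sub hnorm
  have hWnn : ∀ s t, 0 ≤ ((1:Matrix S S ℝ) - γ • Pmat P π)⁻¹ s t := inv_one_sub_nonneg hBnn hnorm
  have hWdiag : ∀ s, 1 ≤ ((1:Matrix S S ℝ) - γ • Pmat P π)⁻¹ s s := inv_one_sub_diag hBnn hnorm
  have hdpos : ∀ s, 0 < dPi γ P μ π s := by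
    intro s
    have h1 : μ s * ((1:Matrix S S ℝ) - γ • Pmat P π)⁻¹ s s ≤ dPi γ P μ π s :=
      Finset.single_le_sum (f := fun t => μ t * ((1:Matrix S S ℝ) - γ • Pmat P π)⁻¹ t s)
        (fun t _ => mul_nonneg (hμ t).le (hWnn t s)) (Finset.mem_univ s)
    have h2 : 0 < μ s * ((1:Matrix S S ℝ) - γ • Pmat P π)⁻¹ s s :=
      mul_pos (hμ s) (lt_of_lt_of_le one_pos (hWdiag s))
    exact lt_of_lt_of_le h2 h1
  have hDpos : ∀ s a, 0 < dPi γ P μ π s * π s a := fun s a => mul_pos (hdpos s) (hπpos s a)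
  obtain ⟨δ, hδ, hδapp⟩ := deriv_package γ P μ π hunit
  have hG1 := HasFDerivAt.fun_sum (u := (Finset.univ : Finset S))
    (fun s _ => HasFDerivAt.fun_sum (u := (Finset.univ : Finset A))
      (fun a _ => (hδ s a).mul_const (R₀ s a)))
  have hZ := HasFDerivAt.fun_sum (u := (Finset.univ : Finset S))
    (fun s _ => HasFDerivAt.fun_sum (u := (Finset.univ : Finset A))
      (fun a _ => (hδ s a).rpow_const (p := q) (Or.inl (hDpos s a).ne')))
  have hZpos : 0 < ∑ s, ∑ a, (dPi γ P μ π s * π s a) ^ q := by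
    refine Finset.sum_pos (fun s _ => Finset.sum_pos (fun a _ => ?_) univ_nonempty) univ_nonempty
    exact Real.rpow_pos_of_pos (hDpos s a) q
  have houter := hZ.rpow_const (p := 1/q) (Or.inl hZpos.ne')
  have hFe : F = fun x : S → A → ℝ =>
      (∑ s, ∑ a, dPi γ P μ x s * x s a * R₀ s a)
        - α * (∑ s, ∑ a, (dPi γ P μ x s * x s a) ^ q) ^ (1/q) := by
    funext x
    rw [hF x]
    simp only [hD]
  have hFder := hG1.sub (houter.const_mul α)
  simp only [Pi.sub_def] at hFder
  rw [← hFe] at hFder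
  refine ⟨hFder.differentiableAt, fun u => ?_⟩
  rw [hFder.fderiv]
  simp only [ContinuousLinearMap.coe_sub', Pi.sub_apply, ContinuousLinearMap.coe_smul',
    Pi.smul_apply, ContinuousLinearMap.coe_sum', Finset.sum_apply, smul_eq_mul]
  have hqne : q ≠ 0 := ne_of_gt hq0
  set Z : ℝ := ∑ s, ∑ a, (dPi γ P μ π s * π s a) ^ q with hZdef
  have hLp : LpNorm q (D π) = Z ^ (1/q : ℝ) := by
    rw [hZdef]
    unfold LpNorm
    congr 1
    refine Finset.sum_congr rfl fun s _ => Finset.sum_congr rfl fun a _ => ?_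
    rw [hD, abs_of_pos (hDpos s a)]
  have hcoef : ∀ s a, α * (1/q * Z ^ (1/q - 1) * (q * (dPi γ P μ π s * π s a) ^ (q - 1)))
      = α * (D π s a / LpNorm q (D π)) ^ (q - 1) := by
    intro s a
    rw [hLp, hD, Real.div_rpow (hDpos s a).le (Real.rpow_nonneg hZpos.le _),
      ← Real.rpow_mul hZpos.le]
    have h1 : (1/q) * (q - 1) = 1 - 1/q := by field_simp
    have h2 : Z ^ (1/q - 1 : ℝ) = (Z ^ ((1:ℝ) - 1/q))⁻¹ := by
      rw [← Real.rpow_neg hZpos.le]; congr 1; ring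
    rw [h1, h2]
    have h3 : Z ^ ((1:ℝ) - 1/q) ≠ 0 := (Real.rpow_pos_of_pos hZpos _).ne'
    field_simp
  have hδu : ∀ s a, δ s a u = dPi γ P μ π s * u s a + π s a * ∑ s₀, μ s₀ *
      (((1 - γ • Pmat P π)⁻¹ : Matrix S S ℝ) * (γ • Pmat P u) *
        ((1 - γ • Pmat P π)⁻¹ : Matrix S S ℝ)) s₀ s := fun s a => hδapp s a u
  have hvec : vstar = ((1 - γ • Pmat P π)⁻¹ : Matrix S S ℝ) *ᵥ
      (fun s => ∑ a, π s a * Rstar s a) := by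
    funext s
    rw [hvstar s]
    rfl
  have hdvec : dPi γ P μ π = μ ᵥ* ((1 - γ • Pmat P π)⁻¹ : Matrix S S ℝ) := by
    funext s
    rfl
  have hkey : ∑ s, (∑ s₀, μ s₀ *
        (((1 - γ • Pmat P π)⁻¹ : Matrix S S ℝ) * (γ • Pmat P u) *
          ((1 - γ • Pmat P π)⁻¹ : Matrix S S ℝ)) s₀ s) * (∑ a, π s a * Rstar s a)
      = ∑ s, ∑ a, dPi γ P μ π s * (γ * ∑ t, P s a t * vstar t) * u s a := by
    have h0 : ∑ s, (∑ s₀, μ s₀ *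
        (((1 - γ • Pmat P π)⁻¹ : Matrix S S ℝ) * (γ • Pmat P u) *
          ((1 - γ • Pmat P π)⁻¹ : Matrix S S ℝ)) s₀ s) * (∑ a, π s a * Rstar s a)
        = ∑ s, dPi γ P μ π s * ((γ • Pmat P u) *ᵥ vstar) s := by
      calc ∑ s, (∑ s₀, μ s₀ *
            (((1 - γ • Pmat P π)⁻¹ : Matrix S S ℝ) * (γ • Pmat P u) *
              ((1 - γ • Pmat P π)⁻¹ : Matrix S S ℝ)) s₀ s) * (∑ a, π s a * Rstar s a)
          = (μ ᵥ* (((1 - γ • Pmat P π)⁻¹ : Matrix S S ℝ) * (γ • Pmat P u) *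
              ((1 - γ • Pmat P π)⁻¹ : Matrix S S ℝ)))  ⬝ᵥ (fun s => ∑ a, π s a * Rstar s a) := rfl
        _ = ((μ ᵥ* (((1 - γ • Pmat P π)⁻¹ : Matrix S S ℝ) * (γ • Pmat P u))) ᵥ*
              ((1 - γ • Pmat P π)⁻¹ : Matrix S S ℝ)) ⬝ᵥ (fun s => ∑ a, π s a * Rstar s a) := by
            rw [← Matrix.vecMul_vecMul]
        _ = (μ ᵥ* (((1 - γ • Pmat P π)⁻¹ : Matrix S S ℝ) * (γ • Pmat P u))) ⬝ᵥ
              (((1 - γ • Pmat P π)⁻¹ : Matrix S S ℝ) *ᵥ (fun s => ∑ a, π s a * Rstar s a)) := by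
            rw [Matrix.dotProduct_mulVec]
        _ = ((μ ᵥ* ((1 - γ • Pmat P π)⁻¹ : Matrix S S ℝ)) ᵥ* (γ • Pmat P u)) ⬝ᵥ vstar := by
            rw [← hvec, ← Matrix.vecMul_vecMul]
        _ = (μ ᵥ* ((1 - γ • Pmat P π)⁻¹ : Matrix S S ℝ)) ⬝ᵥ ((γ • Pmat P u) *ᵥ vstar) := by
            rw [Matrix.dotProduct_mulVec]
        _ = ∑ s, dPi γ P μ π s * ((γ • Pmat P u) *ᵥ vstar) s := by rw [← hdvec]; rfl
    rw [h0]
    refine Finset.sum_congr rfl fun s _ => ?_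
    have h1 : ((γ • Pmat P u) *ᵥ vstar) s = γ * ∑ a, u s a * ∑ t, P s a t * vstar t := by
      show ∑ t, (γ • Pmat P u) s t * vstar t = _
      simp only [Matrix.smul_apply, Pmat, smul_eq_mul, Finset.sum_mul, Finset.mul_sum]
      rw [Finset.sum_comm]
      exact Finset.sum_congr rfl fun a _ => Finset.sum_congr rfl fun t _ => by ring
    rw [h1, Finset.mul_sum, Finset.mul_sum]
    exact Finset.sum_congr rfl fun a _ => by ring
  calc ∑ s, ∑ a, R₀ s a * δ s a u -
      α * (1/q * Z ^ (1/q - 1) *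
        ∑ s, ∑ a, q * (dPi γ P μ π s * π s a) ^ (q - 1) * δ s a u)
      = ∑ s, ∑ a, (R₀ s a * δ s a u -
          α * (1/q * Z ^ (1/q - 1) * (q * (dPi γ P μ π s * π s a) ^ (q - 1) * δ s a u))) := by
        simp only [Finset.mul_sum, ← Finset.sum_sub_distrib]
    _ = ∑ s, ∑ a, Rstar s a * δ s a u := by
        refine Finset.sum_congr rfl fun s _ => Finset.sum_congr rfl fun a _ => ?_
        rw [hRstar s a]
        linear_combination (-(δ s a u)) * hcoef s a
    _ = (∑ s, ∑ a, Rstar s a * (dPi γ P μ π s * u s a)) +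
        ∑ s, (∑ s₀, μ s₀ *
          (((1 - γ • Pmat P π)⁻¹ : Matrix S S ℝ) * (γ • Pmat P u) *
            ((1 - γ • Pmat P π)⁻¹ : Matrix S S ℝ)) s₀ s) * (∑ a, π s a * Rstar s a) := by
        simp only [hδu, mul_add, Finset.sum_add_distrib]
        congr 1
        refine Finset.sum_congr rfl fun s _ => ?_
        rw [Finset.mul_sum]
        exact Finset.sum_congr rfl fun a _ => by ring
    _ = (∑ s, ∑ a, Rstar s a * (dPi γ P μ π s * u s a)) +
        ∑ s, ∑ a, dPi γ P μ π s * (γ * ∑ t, P s a t * vstar t) * u s a := by rw [hkey]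
    _ = ∑ s, ∑ a, dPi γ P μ π s * Qstar s a * u s a := by
        rw [← Finset.sum_add_distrib]
        refine Finset.sum_congr rfl fun s _ => ?_
        rw [← Finset.sum_add_distrib]
        refine Finset.sum_congr rfl fun a _ => ?_
        rw [hQstar s a]
        ring

end Main
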